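/- Let G be a graph of order n in which every two adjacent vertices have at most k common neighbors and every two nonadjacent vertices have at most l common neighbors, with 0 ≤ k ≤ l. Then every row sum of the matrix C = A² - (k+1-l)A - (n-1)l·I is nonpositive, where A is the adjacency matrix of G. -/
import Mathlib

open Finset Matrix SimpleGraph

theorem row_sums_nonpositive {n k l : ℕ} (hkl : k ≤ l) (G : SimpleGraph (Fin n))
    [DecidableRel G.Adj]
    (hadj : ∀ u v : Fin n, G.Adj u v →
      (G.neighborFinset u ∩ G.neighborFinset v).card ≤ k)
    (hnonadj : ∀ u v : Fin n, u ≠ v → ¬ G.Adj u v →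
      (G.neighborFinset u ∩ G.neighborFinset v).card ≤ l) :
    ∀ u : Fin n,
      ∑ v : Fin n,
        ((G.adjMatrix ℝ) ^ 2 - ((k : ℝ) + 1 - l) • (G.adjMatrix ℝ) -
          (((n : ℝ) - 1) * l) • (1 : Matrix (Fin n) (Fin n) ℝ)) u v ≤ 0 := by
  intro u
  have hn : 1 ≤ n := Fin.pos u
  set d : ℝ := (G.degree u : ℝ) with hd
  -- entries of A^2 count common neighbors
  have hA2 : ∀ v : Fin n, ((G.adjMatrix ℝ) ^ 2) u v
      = ((G.neighborFinset u ∩ G.neighborFinset v).card : ℝ) := by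
    intro v
    have h1 : (G.neighborFinset u ∩ G.neighborFinset v)
        = Finset.univ.filter (fun w => G.Adj u w ∧ G.Adj w v) := by
      ext w
      simp [SimpleGraph.mem_neighborFinset, SimpleGraph.adj_comm]
    rw [sq, Matrix.mul_apply, h1, Finset.card_filter]
    push_cast
    simp only [SimpleGraph.adjMatrix_apply, ite_and, mul_ite, mul_one, mul_zero, ite_mul, zero_mul, one_mul]
    exact Finset.sum_congr rfl fun w _ => by
      by_cases h1 : G.Adj u w <;> by_cases h2 : G.Adj w v <;> simp [h1, h2]
  -- row sum of A
  have hA : ∑ v : Fin n, (G.adjMatrix ℝ) u v = d := by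
    simp [SimpleGraph.adjMatrix_apply, Finset.sum_boole, hd, SimpleGraph.degree,
      SimpleGraph.neighborFinset_eq_filter]
  -- row sum of 1
  have hI : ∑ v : Fin n, (1 : Matrix (Fin n) (Fin n) ℝ) u v = 1 := by
    simp [Matrix.one_apply]
  -- bound the common-neighbor counts
  have hbound : ∑ v : Fin n, ((G.neighborFinset u ∩ G.neighborFinset v).card : ℝ)
      ≤ ∑ v : Fin n, (if v = u then d else if G.Adj u v then (k : ℝ) else l) := by
    apply Finset.sum_le_sum
    intro v _
    by_cases hv : v = u
    · subst hv
      simp [hd, Finset.inter_self]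
    · by_cases ha : G.Adj u v
      · simp only [if_neg hv, if_pos ha]
        exact_mod_cast hadj u v ha
      · simp only [if_neg hv, if_neg ha]
        exact_mod_cast hnonadj u v (Ne.symm hv) ha
  -- compute the bounding sum
  have hsum : ∑ v : Fin n, (if v = u then d else if G.Adj u v then (k : ℝ) else l)
      = d + (((k : ℝ) - l) * d + ((n : ℝ) - 1) * l) := by
    rw [← Finset.add_sum_erase _ _ (Finset.mem_univ u), if_pos rfl]
    congr 1
    have h2 : ∀ v ∈ Finset.univ.erase u,
        (if v = u then d else if G.Adj u v then (k : ℝ) else l)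
        = (l + if G.Adj u v then (k : ℝ) - l else 0) := by
      intro v hv
      rw [if_neg (Finset.mem_erase.mp hv).1]
      split <;> ring
    rw [Finset.sum_congr rfl h2, Finset.sum_add_distrib, Finset.sum_const,
      Finset.card_erase_of_mem (Finset.mem_univ u), Finset.card_univ, Fintype.card_fin]
    have h3 : ∑ v ∈ Finset.univ.erase u, (if G.Adj u v then (k : ℝ) - l else 0)
        = ∑ v : Fin n, (if G.Adj u v then (k : ℝ) - l else 0) := by
      apply Finset.sum_erase
      simp
    rw [h3]
    have h4 : ∑ v : Fin n, (if G.Adj u v then (k : ℝ) - l else 0) = ((k : ℝ) - l) * d := by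
      rw [Finset.sum_ite, Finset.sum_const, Finset.sum_const_zero, add_zero, nsmul_eq_mul]
      simp [hd, SimpleGraph.degree, SimpleGraph.neighborFinset_eq_filter, mul_comm]
    rw [h4, nsmul_eq_mul, Nat.cast_sub hn]
    push_cast
    ring
  -- put it together
  simp only [Matrix.sub_apply, Matrix.smul_apply, smul_eq_mul,
    Finset.sum_sub_distrib, ← Finset.mul_sum]
  rw [hA, hI]
  have : ∑ v : Fin n, ((G.adjMatrix ℝ) ^ 2) u v
      ≤ d + (((k : ℝ) - l) * d + ((n : ℝ) - 1) * l) := by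
    calc ∑ v : Fin n, ((G.adjMatrix ℝ) ^ 2) u v
        = ∑ v : Fin n, ((G.neighborFinset u ∩ G.neighborFinset v).card : ℝ) := by
          exact Finset.sum_congr rfl fun v _ => hA2 v
      _ ≤ _ := hbound.trans_eq hsum
  nlinarith [this]
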